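/- Let A and H be Lie coalgebras over a field k with cobrackets δ_A: A → A ⊗ A and δ_H: H → H ⊗ H, A a left H-comodule via φ: A → H ⊗ A and H a right A-comodule via ψ: H → H ⊗ A, satisfying the co-matched pair conditions (CM1) and (CM2). Then D = A ⊕ H with cobracket δ_D(a) = δ_A(a) + φ(a) − τ(φ(a)) and δ_D(x) = δ_H(x) + ψ(x) − τ(ψ(x)) (where τ is the flip) is a Lie coalgebra, i.e. δ_D is anti-cosymmetric and satisfies the co-Jacobi identity (1 + ξ + ξ²)(δ_D ⊗ id)δ_D = 0, where ξ is the cyclic permutation of three tensor factors. -/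

import Mathlib

open TensorProduct

set_option maxSynthPendingDepth 8
set_option maxHeartbeats 4000000

noncomputable section

/-- The flip `τ : M ⊗ M → M ⊗ M`. -/
def flipT (k M : Type*) [Field k] [AddCommGroup M] [Module k M] :
    M ⊗[k] M →ₗ[k] M ⊗[k] M := (TensorProduct.comm k M M).toLinearMap

/-- The cyclic permutation `ξ : (a ⊗ b) ⊗ c ↦ (c ⊗ a) ⊗ b`. -/
def cyc (k M : Type*) [Field k] [AddCommGroup M] [Module k M] :
    (M ⊗[k] M) ⊗[k] M →ₗ[k] (M ⊗[k] M) ⊗[k] M :=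
  ((TensorProduct.comm k (M ⊗[k] M) M).trans
    (TensorProduct.assoc k M M M).symm).toLinearMap

/-- A Lie coalgebra structure: anti-cosymmetry and the co-Jacobi identity. -/
def IsLieCoalg (k M : Type*) [Field k] [AddCommGroup M] [Module k M]
    (δ : M →ₗ[k] M ⊗[k] M) : Prop :=
  ((LinearMap.id + flipT k M) ∘ₗ δ = 0) ∧
  ((LinearMap.id + cyc k M + cyc k M ∘ₗ cyc k M) ∘ₗ (δ.rTensor M) ∘ₗ δ = 0)

/-! ### Auxiliary infrastructure -/

section Infra

/-- heterogeneous cyclic rotation -/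
def hc (k : Type*) [Field k] (X Y Z : Type*) [AddCommGroup X] [Module k X]
    [AddCommGroup Y] [Module k Y] [AddCommGroup Z] [Module k Z] :
    (X ⊗[k] Y) ⊗[k] Z →ₗ[k] (Z ⊗[k] X) ⊗[k] Y :=
  ((TensorProduct.comm k (X ⊗[k] Y) Z).trans
    (TensorProduct.assoc k Z X Y).symm).toLinearMap

variable {k : Type*} [Field k]
variable {X Y Z W V D P Q R S T U : Type*}
  [AddCommGroup X] [Module k X] [AddCommGroup Y] [Module k Y]
  [AddCommGroup Z] [Module k Z] [AddCommGroup W] [Module k W]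
  [AddCommGroup V] [Module k V] [AddCommGroup D] [Module k D]
  [AddCommGroup P] [Module k P] [AddCommGroup Q] [Module k Q]
  [AddCommGroup R] [Module k R] [AddCommGroup S] [Module k S]
  [AddCommGroup T] [Module k T] [AddCommGroup U] [Module k U]

@[simp] lemma hc_tmul (x : X) (y : Y) (z : Z) :
    hc k X Y Z ((x ⊗ₜ y) ⊗ₜ z) = (z ⊗ₜ x) ⊗ₜ y := rfl

lemma cyc_eq_hc (M : Type*) [AddCommGroup M] [Module k M] : cyc k M = hc k M M M := rfl

lemma flipT_eq (M : Type*) [AddCommGroup M] [Module k M] :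
    flipT k M = (TensorProduct.comm k M M).toLinearMap := rfl

lemma hc3 : hc k Y Z X ∘ₗ hc k Z X Y ∘ₗ hc k X Y Z =
    (LinearMap.id : (X ⊗[k] Y) ⊗[k] Z →ₗ[k] _) := by
  apply TensorProduct.ext_threefold
  intro x y z
  rfl

lemma hc3_comp (G : W →ₗ[k] (X ⊗[k] Y) ⊗[k] Z) :
    hc k Y Z X ∘ₗ (hc k Z X Y ∘ₗ (hc k X Y Z ∘ₗ G)) = G := by
  rw [← LinearMap.comp_assoc, ← LinearMap.comp_assoc, LinearMap.comp_assoc _ (hc k Z X Y),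
    hc3, LinearMap.id_comp]

/-- cyclic rotation versus a triple `map`, with a tail. -/
lemma hc_mapD (f : X →ₗ[k] D) (g : Y →ₗ[k] D) (h : Z →ₗ[k] D)
    (t : T →ₗ[k] (X ⊗[k] Y) ⊗[k] Z) :
    hc k D D D ∘ₗ (map (map f g) h ∘ₗ t) = map (map h f) g ∘ₗ (hc k X Y Z ∘ₗ t) := by
  rw [← LinearMap.comp_assoc, ← LinearMap.comp_assoc]
  congr 1
  apply TensorProduct.ext_threefold
  intro x y z
  rfl

lemma flip_mapD (f : X →ₗ[k] D) (g : Y →ₗ[k] D) (t : T →ₗ[k] X ⊗[k] Y) :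
    flipT k D ∘ₗ (map f g ∘ₗ t) =
      map g f ∘ₗ ((TensorProduct.comm k X Y).toLinearMap ∘ₗ t) := by
  rw [← LinearMap.comp_assoc, ← LinearMap.comp_assoc]
  congr 1
  apply TensorProduct.ext'
  intro x y
  rfl

lemma comm_commD (t : T →ₗ[k] X ⊗[k] Y) :
    (TensorProduct.comm k Y X).toLinearMap ∘ₗ ((TensorProduct.comm k X Y).toLinearMap ∘ₗ t)
      = t := by
  rw [← LinearMap.comp_assoc]
  rw [show (TensorProduct.comm k Y X).toLinearMap ∘ₗ (TensorProduct.comm k X Y).toLinearMap =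
      (LinearMap.id : X ⊗[k] Y →ₗ[k] X ⊗[k] Y) from TensorProduct.ext' fun x y => rfl,
    LinearMap.id_comp]

lemma rT_mapD (F : D →ₗ[k] D ⊗[k] D) (f : X →ₗ[k] D) (g : Y →ₗ[k] D)
    (t : T →ₗ[k] X ⊗[k] Y) :
    F.rTensor D ∘ₗ (map f g ∘ₗ t) = map (F ∘ₗ f) g ∘ₗ t := by
  rw [← LinearMap.comp_assoc]
  congr 1
  apply TensorProduct.ext'
  intro x y
  simp

lemma map_comp_rT (p : V →ₗ[k] W) (q : X →ₗ[k] V) (g : Y →ₗ[k] Z) :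
    map (p ∘ₗ q) g = map p g ∘ₗ (q.rTensor Y) := by
  apply TensorProduct.ext'
  intro x y
  simp

lemma map_sub_left (f g : X →ₗ[k] V) (h : Y →ₗ[k] Z) :
    map (f - g) h = map f h - map g h := by
  apply TensorProduct.ext'
  intro x y
  simp [sub_tmul]

lemma map_neg_left (f : X →ₗ[k] V) (h : Y →ₗ[k] Z) :
    map (-f) h = - map f h := by
  apply TensorProduct.ext'
  intro x y
  simp [neg_tmul]

lemma equiv_cancel (e : X ≃ₗ[k] Y) (t : T →ₗ[k] X) :
    e.symm.toLinearMap ∘ₗ (e.toLinearMap ∘ₗ t) = t := by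
  rw [← LinearMap.comp_assoc]
  convert LinearMap.id_comp t
  ext x; simp

lemma equiv_cancel' (e : X ≃ₗ[k] Y) (t : T →ₗ[k] Y) :
    e.toLinearMap ∘ₗ (e.symm.toLinearMap ∘ₗ t) = t := by
  rw [← LinearMap.comp_assoc]
  convert LinearMap.id_comp t
  ext x; simp

/-- single rotation past an `rTensor`: `(W ⊗ P) → (W ⊗ Q) ⊗ R`. -/
lemma rot1 (f : P →ₗ[k] Q ⊗[k] R) (t : T →ₗ[k] W ⊗[k] P) :
    hc k Q R W ∘ₗ ((f.rTensor W) ∘ₗ ((TensorProduct.comm k W P).toLinearMap ∘ₗ t)) =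
      (TensorProduct.assoc k W Q R).symm.toLinearMap ∘ₗ ((f.lTensor W) ∘ₗ t) := by
  rw [← LinearMap.comp_assoc, ← LinearMap.comp_assoc, ← LinearMap.comp_assoc]
  congr 1
  apply TensorProduct.ext'
  intro w p
  simp only [LinearMap.comp_apply, LinearEquiv.coe_coe, comm_tmul, LinearMap.rTensor_tmul,
    LinearMap.lTensor_tmul]
  generalize f p = u
  induction u using TensorProduct.induction_on with
  | zero => simp
  | tmul q r => simp
  | add u v hu hv => simp [add_tmul, tmul_add, hu, hv]

/-- double rotation: `(P ⊗ S) → (Q ⊗ S) ⊗ R`. -/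
lemma rot2 (f : P →ₗ[k] Q ⊗[k] R) (t : T →ₗ[k] P ⊗[k] S) :
    hc k S R Q ∘ₗ (hc k R Q S ∘ₗ
        ((((TensorProduct.comm k Q R).toLinearMap ∘ₗ f).rTensor S) ∘ₗ t)) =
      (TensorProduct.assoc k Q S R).symm.toLinearMap ∘ₗ
        (((TensorProduct.comm k R S).toLinearMap.lTensor Q) ∘ₗ
          ((TensorProduct.assoc k Q R S).toLinearMap ∘ₗ ((f.rTensor S) ∘ₗ t))) := by
  rw [← LinearMap.comp_assoc, ← LinearMap.comp_assoc, ← LinearMap.comp_assoc,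
    ← LinearMap.comp_assoc, ← LinearMap.comp_assoc]
  congr 1
  apply TensorProduct.ext'
  intro p s
  simp only [LinearMap.comp_apply, LinearEquiv.coe_coe, LinearMap.rTensor_tmul]
  generalize f p = u
  induction u using TensorProduct.induction_on with
  | zero => simp
  | tmul q r => simp
  | add u v hu hv => simp [add_tmul, tmul_add, hu, hv]

/-- double rotation with a pre-flip: `(S ⊗ P) → (Q ⊗ S) ⊗ R`. -/
lemma rot2c (f : P →ₗ[k] Q ⊗[k] R) (t : T →ₗ[k] S ⊗[k] P) :
    hc k S R Q ∘ₗ (hc k R Q S ∘ₗ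
        ((((TensorProduct.comm k Q R).toLinearMap ∘ₗ f).rTensor S) ∘ₗ
          ((TensorProduct.comm k S P).toLinearMap ∘ₗ t))) =
      ((TensorProduct.comm k S Q).toLinearMap.rTensor R) ∘ₗ
        ((TensorProduct.assoc k S Q R).symm.toLinearMap ∘ₗ ((f.lTensor S) ∘ₗ t)) := by
  rw [← LinearMap.comp_assoc, ← LinearMap.comp_assoc, ← LinearMap.comp_assoc,
    ← LinearMap.comp_assoc, ← LinearMap.comp_assoc]
  congr 1
  apply TensorProduct.ext'
  intro s p
  simp only [LinearMap.comp_apply, LinearEquiv.coe_coe, comm_tmul, LinearMap.rTensor_tmul,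
    LinearMap.lTensor_tmul]
  generalize f p = u
  induction u using TensorProduct.induction_on with
  | zero => simp
  | tmul q r => simp
  | add u v hu hv => simp [add_tmul, tmul_add, hu, hv]

lemma my_prod_ext {A H : Type*} [AddCommGroup A] [Module k A] [AddCommGroup H] [Module k H]
    {F G : (A × H) →ₗ[k] V}
    (h1 : F ∘ₗ LinearMap.inl k A H = G ∘ₗ LinearMap.inl k A H)
    (h2 : F ∘ₗ LinearMap.inr k A H = G ∘ₗ LinearMap.inr k A H) : F = G :=
  LinearMap.prod_ext h1 h2

end Infra

theorem stmt2 {k A H : Type*} [Field k]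
    [AddCommGroup A] [Module k A] [AddCommGroup H] [Module k H]
    (δA : A →ₗ[k] A ⊗[k] A) (δH : H →ₗ[k] H ⊗[k] H)
    (φ : A →ₗ[k] H ⊗[k] A) (ψ : H →ₗ[k] H ⊗[k] A)
    (hA : IsLieCoalg k A δA) (hH : IsLieCoalg k H δH)
    -- A is a left H-comodule
    (hφ : (δH.rTensor A) ∘ₗ φ =
      (TensorProduct.assoc k H H A).symm.toLinearMap ∘ₗ (φ.lTensor H) ∘ₗ φ -
      ((TensorProduct.comm k H H).toLinearMap.rTensor A) ∘ₗ
        (TensorProduct.assoc k H H A).symm.toLinearMap ∘ₗ (φ.lTensor H) ∘ₗ φ)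
    -- H is a right A-comodule
    (hψ : (δA.lTensor H) ∘ₗ ψ =
      (TensorProduct.assoc k H A A).toLinearMap ∘ₗ (ψ.rTensor A) ∘ₗ ψ -
      ((flipT k A).lTensor H) ∘ₗ
        (TensorProduct.assoc k H A A).toLinearMap ∘ₗ (ψ.rTensor A) ∘ₗ ψ)
    -- (CM1)
    (hCM1 : (δA.lTensor H) ∘ₗ φ =
      (TensorProduct.assoc k H A A).toLinearMap ∘ₗ (φ.rTensor A) ∘ₗ δA +
      (TensorProduct.assoc k H A A).toLinearMap ∘ₗ
        ((TensorProduct.comm k A H).toLinearMap.rTensor A) ∘ₗ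
        (TensorProduct.assoc k A H A).symm.toLinearMap ∘ₗ (φ.lTensor A) ∘ₗ δA +
      (TensorProduct.assoc k H A A).toLinearMap ∘ₗ (ψ.rTensor A) ∘ₗ φ -
      ((flipT k A).lTensor H) ∘ₗ
        (TensorProduct.assoc k H A A).toLinearMap ∘ₗ (ψ.rTensor A) ∘ₗ φ)
    -- (CM2)
    (hCM2 : (δH.rTensor A) ∘ₗ ψ =
      (TensorProduct.assoc k H H A).symm.toLinearMap ∘ₗ (ψ.lTensor H) ∘ₗ δH +
      (TensorProduct.assoc k H H A).symm.toLinearMap ∘ₗ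
        ((TensorProduct.comm k A H).toLinearMap.lTensor H) ∘ₗ
        (TensorProduct.assoc k H A H).toLinearMap ∘ₗ (ψ.rTensor H) ∘ₗ δH +
      (TensorProduct.assoc k H H A).symm.toLinearMap ∘ₗ (φ.lTensor H) ∘ₗ ψ -
      ((flipT k H).rTensor A) ∘ₗ
        (TensorProduct.assoc k H H A).symm.toLinearMap ∘ₗ (φ.lTensor H) ∘ₗ ψ) :
    ∀ δD : (A × H) →ₗ[k] (A × H) ⊗[k] (A × H),
      (∀ a : A, δD (a, 0) =
        (TensorProduct.map (LinearMap.inl k A H) (LinearMap.inl k A H)) (δA a) +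
        (TensorProduct.map (LinearMap.inr k A H) (LinearMap.inl k A H)) (φ a) -
        flipT k (A × H)
          ((TensorProduct.map (LinearMap.inr k A H) (LinearMap.inl k A H)) (φ a))) →
      (∀ x : H, δD (0, x) =
        (TensorProduct.map (LinearMap.inr k A H) (LinearMap.inr k A H)) (δH x) +
        (TensorProduct.map (LinearMap.inr k A H) (LinearMap.inl k A H)) (ψ x) -
        flipT k (A × H)
          ((TensorProduct.map (LinearMap.inr k A H) (LinearMap.inl k A H)) (ψ x))) →
      IsLieCoalg k (A × H) δD := by
  intro δD h1 h2
  -- notation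
  set i := LinearMap.inl k A H with hidef
  set j := LinearMap.inr k A H with hjdef
  -- normalize flipT to comm in the hypotheses
  rw [flipT_eq] at hψ hCM1 hCM2
  -- antisymmetry of δA and δH
  have hAs : (TensorProduct.comm k A A).toLinearMap ∘ₗ δA = -δA := by
    have h := hA.1
    rw [LinearMap.add_comp, LinearMap.id_comp, flipT_eq] at h
    exact eq_neg_of_add_eq_zero_right h
  have hHs : (TensorProduct.comm k H H).toLinearMap ∘ₗ δH = -δH := by
    have h := hH.1
    rw [LinearMap.add_comp, LinearMap.id_comp, flipT_eq] at h
    exact eq_neg_of_add_eq_zero_right h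
  -- δD on the two components
  have hi : δD ∘ₗ i = map i i ∘ₗ δA + map j i ∘ₗ φ - map i j ∘ₗ ((TensorProduct.comm k H A).toLinearMap ∘ₗ φ) := by
    apply LinearMap.ext
    intro a
    have hf := LinearMap.congr_fun (flip_mapD (k := k) j i φ) a
    simp only [LinearMap.comp_apply] at hf ⊢
    rw [show i a = (a, 0) from rfl, h1 a, hf]
    simp [LinearMap.add_apply, LinearMap.sub_apply, LinearMap.comp_apply]
  have hj : δD ∘ₗ j = map j j ∘ₗ δH + map j i ∘ₗ ψ - map i j ∘ₗ ((TensorProduct.comm k H A).toLinearMap ∘ₗ ψ) := by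
    apply LinearMap.ext
    intro x
    have hf := LinearMap.congr_fun (flip_mapD (k := k) j i ψ) x
    simp only [LinearMap.comp_apply] at hf ⊢
    rw [show j x = (0, x) from rfl, h2 x, hf]
    simp [LinearMap.add_apply, LinearMap.sub_apply, LinearMap.comp_apply]
  constructor
  · -- anti-cosymmetry
    apply my_prod_ext (k := k)
    · rw [LinearMap.comp_assoc, hi]
      simp only [LinearMap.comp_add, LinearMap.comp_sub, LinearMap.zero_comp,
        LinearMap.id_comp, flip_mapD, comm_commD, LinearMap.add_comp,
        LinearMap.comp_assoc, hAs, LinearMap.comp_neg]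
      abel
    · rw [LinearMap.comp_assoc, hj]
      simp only [LinearMap.comp_add, LinearMap.comp_sub, LinearMap.zero_comp,
        LinearMap.id_comp, flip_mapD, comm_commD, LinearMap.add_comp,
        LinearMap.comp_assoc, hHs, LinearMap.comp_neg]
      abel
  · -- co-Jacobi
    -- the five vanishing composites
    have hJA : ((LinearMap.id + cyc k A + cyc k A ∘ₗ cyc k A) ∘ₗ ((δA.rTensor A) ∘ₗ δA)) = 0 := hA.2
    have hJH : ((LinearMap.id + cyc k H + cyc k H ∘ₗ cyc k H) ∘ₗ ((δH.rTensor H) ∘ₗ δH)) = 0 := hH.2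
    have hS1 : ((φ.rTensor A) ∘ₗ δA + (ψ.rTensor A) ∘ₗ φ
      - hc k A A H ∘ₗ (hc k A H A ∘ₗ ((((TensorProduct.comm k H A).toLinearMap ∘ₗ φ).rTensor A) ∘ₗ δA))
      - hc k A A H ∘ₗ (hc k A H A ∘ₗ ((((TensorProduct.comm k H A).toLinearMap ∘ₗ ψ).rTensor A) ∘ₗ φ))
      - hc k A A H ∘ₗ ((δA.rTensor H) ∘ₗ ((TensorProduct.comm k H A).toLinearMap ∘ₗ φ))) = 0 := by
      have e5 : hc k A A H ∘ₗ ((δA.rTensor H) ∘ₗ ((TensorProduct.comm k H A).toLinearMap ∘ₗ φ)) =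
          (TensorProduct.assoc k H A A).symm.toLinearMap ∘ₗ ((δA.lTensor H) ∘ₗ φ) := rot1 δA φ
      have e3 : hc k A A H ∘ₗ (hc k A H A ∘ₗ ((((TensorProduct.comm k H A).toLinearMap ∘ₗ φ).rTensor A) ∘ₗ δA)) =
          -((TensorProduct.comm k A H).toLinearMap.rTensor A ∘ₗ
            ((TensorProduct.assoc k A H A).symm.toLinearMap ∘ₗ ((φ.lTensor A) ∘ₗ δA))) := by
        conv_lhs => rw [show δA = -((TensorProduct.comm k A A).toLinearMap ∘ₗ δA) by rw [hAs, neg_neg]]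
        simp only [LinearMap.comp_neg]
        rw [rot2c φ δA]
      have e4 : hc k A A H ∘ₗ (hc k A H A ∘ₗ ((((TensorProduct.comm k H A).toLinearMap ∘ₗ ψ).rTensor A) ∘ₗ φ)) =
          (TensorProduct.assoc k H A A).symm.toLinearMap ∘ₗ (((TensorProduct.comm k A A).toLinearMap.lTensor H) ∘ₗ
            ((TensorProduct.assoc k H A A).toLinearMap ∘ₗ ((ψ.rTensor A) ∘ₗ φ))) := rot2 ψ φ
      rw [e3, e4, e5, hCM1]
      simp only [LinearMap.comp_add, LinearMap.comp_sub, LinearMap.comp_assoc, equiv_cancel]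
      abel
    have hS2 : ((δH.rTensor A) ∘ₗ φ
      - hc k H A H ∘ₗ ((φ.rTensor H) ∘ₗ ((TensorProduct.comm k H A).toLinearMap ∘ₗ φ))
      + hc k H A H ∘ₗ (hc k A H H ∘ₗ ((((TensorProduct.comm k H A).toLinearMap ∘ₗ φ).rTensor H) ∘ₗ ((TensorProduct.comm k H A).toLinearMap ∘ₗ φ)))) = 0 := by
      have e2 : hc k H A H ∘ₗ ((φ.rTensor H) ∘ₗ ((TensorProduct.comm k H A).toLinearMap ∘ₗ φ)) =
          (TensorProduct.assoc k H H A).symm.toLinearMap ∘ₗ ((φ.lTensor H) ∘ₗ φ) := rot1 φ φ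
      have e3 : hc k H A H ∘ₗ (hc k A H H ∘ₗ ((((TensorProduct.comm k H A).toLinearMap ∘ₗ φ).rTensor H) ∘ₗ ((TensorProduct.comm k H A).toLinearMap ∘ₗ φ))) =
          ((TensorProduct.comm k H H).toLinearMap.rTensor A) ∘ₗ
            ((TensorProduct.assoc k H H A).symm.toLinearMap ∘ₗ ((φ.lTensor H) ∘ₗ φ)) := rot2c φ φ
      rw [e2, e3, hφ]
      abel
    have hS1p : ((ψ.rTensor A) ∘ₗ ψ
      - hc k A A H ∘ₗ (hc k A H A ∘ₗ ((((TensorProduct.comm k H A).toLinearMap ∘ₗ ψ).rTensor A) ∘ₗ ψ))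
      - hc k A A H ∘ₗ ((δA.rTensor H) ∘ₗ ((TensorProduct.comm k H A).toLinearMap ∘ₗ ψ))) = 0 := by
      have e3 : hc k A A H ∘ₗ ((δA.rTensor H) ∘ₗ ((TensorProduct.comm k H A).toLinearMap ∘ₗ ψ)) =
          (TensorProduct.assoc k H A A).symm.toLinearMap ∘ₗ ((δA.lTensor H) ∘ₗ ψ) := rot1 δA ψ
      have e2 : hc k A A H ∘ₗ (hc k A H A ∘ₗ ((((TensorProduct.comm k H A).toLinearMap ∘ₗ ψ).rTensor A) ∘ₗ ψ)) =
          (TensorProduct.assoc k H A A).symm.toLinearMap ∘ₗ (((TensorProduct.comm k A A).toLinearMap.lTensor H) ∘ₗ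
            ((TensorProduct.assoc k H A A).toLinearMap ∘ₗ ((ψ.rTensor A) ∘ₗ ψ))) := rot2 ψ ψ
      rw [e2, e3, hψ]
      simp only [LinearMap.comp_add, LinearMap.comp_sub, LinearMap.comp_assoc, equiv_cancel]
      abel
    have hS2p : ((δH.rTensor A) ∘ₗ ψ
      + hc k H A H ∘ₗ ((ψ.rTensor H) ∘ₗ δH)
      - hc k H A H ∘ₗ ((φ.rTensor H) ∘ₗ ((TensorProduct.comm k H A).toLinearMap ∘ₗ ψ))
      - hc k H A H ∘ₗ (hc k A H H ∘ₗ ((((TensorProduct.comm k H A).toLinearMap ∘ₗ ψ).rTensor H) ∘ₗ δH))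
      + hc k H A H ∘ₗ (hc k A H H ∘ₗ ((((TensorProduct.comm k H A).toLinearMap ∘ₗ φ).rTensor H) ∘ₗ ((TensorProduct.comm k H A).toLinearMap ∘ₗ ψ)))) = 0 := by
      have e2 : hc k H A H ∘ₗ ((ψ.rTensor H) ∘ₗ δH) =
          -((TensorProduct.assoc k H H A).symm.toLinearMap ∘ₗ ((ψ.lTensor H) ∘ₗ δH)) := by
        conv_lhs => rw [show δH = -((TensorProduct.comm k H H).toLinearMap ∘ₗ δH) by rw [hHs, neg_neg]]
        simp only [LinearMap.comp_neg]
        rw [rot1 ψ δH]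
      have e3 : hc k H A H ∘ₗ ((φ.rTensor H) ∘ₗ ((TensorProduct.comm k H A).toLinearMap ∘ₗ ψ)) =
          (TensorProduct.assoc k H H A).symm.toLinearMap ∘ₗ ((φ.lTensor H) ∘ₗ ψ) := rot1 φ ψ
      have e4 : hc k H A H ∘ₗ (hc k A H H ∘ₗ ((((TensorProduct.comm k H A).toLinearMap ∘ₗ ψ).rTensor H) ∘ₗ δH)) =
          (TensorProduct.assoc k H H A).symm.toLinearMap ∘ₗ (((TensorProduct.comm k A H).toLinearMap.lTensor H) ∘ₗ
            ((TensorProduct.assoc k H A H).toLinearMap ∘ₗ ((ψ.rTensor H) ∘ₗ δH))) := rot2 ψ δH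
      have e5 : hc k H A H ∘ₗ (hc k A H H ∘ₗ ((((TensorProduct.comm k H A).toLinearMap ∘ₗ φ).rTensor H) ∘ₗ ((TensorProduct.comm k H A).toLinearMap ∘ₗ ψ))) =
          ((TensorProduct.comm k H H).toLinearMap.rTensor A) ∘ₗ
            ((TensorProduct.assoc k H H A).symm.toLinearMap ∘ₗ ((φ.lTensor H) ∘ₗ ψ)) := rot2c φ ψ
      rw [e2, e3, e4, e5, hCM2]
      abel
    refine my_prod_ext (k := k) (V := ((A × H) ⊗[k] (A × H)) ⊗[k] (A × H)) ?_ ?_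
    · rw [LinearMap.comp_assoc, LinearMap.comp_assoc, hi]
      have expand : (LinearMap.id + cyc k (A × H) + cyc k (A × H) ∘ₗ cyc k (A × H)) ∘ₗ
          ((δD.rTensor (A × H)) ∘ₗ
            (map i i ∘ₗ δA + map j i ∘ₗ φ - map i j ∘ₗ ((TensorProduct.comm k H A).toLinearMap ∘ₗ φ))) =
          map (map i i) i ∘ₗ ((LinearMap.id + cyc k A + cyc k A ∘ₗ cyc k A) ∘ₗ ((δA.rTensor A) ∘ₗ δA))
        + map (map j i) i ∘ₗ ((φ.rTensor A) ∘ₗ δA + (ψ.rTensor A) ∘ₗ φ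
      - hc k A A H ∘ₗ (hc k A H A ∘ₗ ((((TensorProduct.comm k H A).toLinearMap ∘ₗ φ).rTensor A) ∘ₗ δA))
      - hc k A A H ∘ₗ (hc k A H A ∘ₗ ((((TensorProduct.comm k H A).toLinearMap ∘ₗ ψ).rTensor A) ∘ₗ φ))
      - hc k A A H ∘ₗ ((δA.rTensor H) ∘ₗ ((TensorProduct.comm k H A).toLinearMap ∘ₗ φ)))
        + map (map i j) i ∘ₗ (hc k H A A ∘ₗ ((φ.rTensor A) ∘ₗ δA + (ψ.rTensor A) ∘ₗ φ
      - hc k A A H ∘ₗ (hc k A H A ∘ₗ ((((TensorProduct.comm k H A).toLinearMap ∘ₗ φ).rTensor A) ∘ₗ δA))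
      - hc k A A H ∘ₗ (hc k A H A ∘ₗ ((((TensorProduct.comm k H A).toLinearMap ∘ₗ ψ).rTensor A) ∘ₗ φ))
      - hc k A A H ∘ₗ ((δA.rTensor H) ∘ₗ ((TensorProduct.comm k H A).toLinearMap ∘ₗ φ))))
        + map (map i i) j ∘ₗ (hc k A H A ∘ₗ (hc k H A A ∘ₗ ((φ.rTensor A) ∘ₗ δA + (ψ.rTensor A) ∘ₗ φ
      - hc k A A H ∘ₗ (hc k A H A ∘ₗ ((((TensorProduct.comm k H A).toLinearMap ∘ₗ φ).rTensor A) ∘ₗ δA))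
      - hc k A A H ∘ₗ (hc k A H A ∘ₗ ((((TensorProduct.comm k H A).toLinearMap ∘ₗ ψ).rTensor A) ∘ₗ φ))
      - hc k A A H ∘ₗ ((δA.rTensor H) ∘ₗ ((TensorProduct.comm k H A).toLinearMap ∘ₗ φ)))))
        + map (map j j) i ∘ₗ ((δH.rTensor A) ∘ₗ φ
      - hc k H A H ∘ₗ ((φ.rTensor H) ∘ₗ ((TensorProduct.comm k H A).toLinearMap ∘ₗ φ))
      + hc k H A H ∘ₗ (hc k A H H ∘ₗ ((((TensorProduct.comm k H A).toLinearMap ∘ₗ φ).rTensor H) ∘ₗ ((TensorProduct.comm k H A).toLinearMap ∘ₗ φ))))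
        + map (map i j) j ∘ₗ (hc k H H A ∘ₗ ((δH.rTensor A) ∘ₗ φ
      - hc k H A H ∘ₗ ((φ.rTensor H) ∘ₗ ((TensorProduct.comm k H A).toLinearMap ∘ₗ φ))
      + hc k H A H ∘ₗ (hc k A H H ∘ₗ ((((TensorProduct.comm k H A).toLinearMap ∘ₗ φ).rTensor H) ∘ₗ ((TensorProduct.comm k H A).toLinearMap ∘ₗ φ)))))
        + map (map j i) j ∘ₗ (hc k A H H ∘ₗ (hc k H H A ∘ₗ ((δH.rTensor A) ∘ₗ φ
      - hc k H A H ∘ₗ ((φ.rTensor H) ∘ₗ ((TensorProduct.comm k H A).toLinearMap ∘ₗ φ))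
      + hc k H A H ∘ₗ (hc k A H H ∘ₗ ((((TensorProduct.comm k H A).toLinearMap ∘ₗ φ).rTensor H) ∘ₗ ((TensorProduct.comm k H A).toLinearMap ∘ₗ φ)))))) := by
        simp only [LinearMap.comp_add, LinearMap.comp_sub, LinearMap.add_comp,
          LinearMap.sub_comp, LinearMap.id_comp, LinearMap.comp_assoc, rT_mapD]
        rw [hi, hj]
        simp only [map_add_left, map_sub_left, map_comp_rT, LinearMap.comp_add,
          LinearMap.comp_sub, LinearMap.add_comp, LinearMap.sub_comp,
          LinearMap.comp_assoc, cyc_eq_hc, hc_mapD, hc3_comp]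
        abel
      rw [expand, hJA, hS1, hS2]
      simp only [LinearMap.comp_zero, LinearMap.zero_comp, add_zero, zero_add]
    · rw [LinearMap.comp_assoc, LinearMap.comp_assoc, hj]
      have expand : (LinearMap.id + cyc k (A × H) + cyc k (A × H) ∘ₗ cyc k (A × H)) ∘ₗ
          ((δD.rTensor (A × H)) ∘ₗ
            (map j j ∘ₗ δH + map j i ∘ₗ ψ - map i j ∘ₗ ((TensorProduct.comm k H A).toLinearMap ∘ₗ ψ))) =
          map (map j j) j ∘ₗ ((LinearMap.id + cyc k H + cyc k H ∘ₗ cyc k H) ∘ₗ ((δH.rTensor H) ∘ₗ δH))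
        + map (map j i) i ∘ₗ ((ψ.rTensor A) ∘ₗ ψ
      - hc k A A H ∘ₗ (hc k A H A ∘ₗ ((((TensorProduct.comm k H A).toLinearMap ∘ₗ ψ).rTensor A) ∘ₗ ψ))
      - hc k A A H ∘ₗ ((δA.rTensor H) ∘ₗ ((TensorProduct.comm k H A).toLinearMap ∘ₗ ψ)))
        + map (map i j) i ∘ₗ (hc k H A A ∘ₗ ((ψ.rTensor A) ∘ₗ ψ
      - hc k A A H ∘ₗ (hc k A H A ∘ₗ ((((TensorProduct.comm k H A).toLinearMap ∘ₗ ψ).rTensor A) ∘ₗ ψ))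
      - hc k A A H ∘ₗ ((δA.rTensor H) ∘ₗ ((TensorProduct.comm k H A).toLinearMap ∘ₗ ψ))))
        + map (map i i) j ∘ₗ (hc k A H A ∘ₗ (hc k H A A ∘ₗ ((ψ.rTensor A) ∘ₗ ψ
      - hc k A A H ∘ₗ (hc k A H A ∘ₗ ((((TensorProduct.comm k H A).toLinearMap ∘ₗ ψ).rTensor A) ∘ₗ ψ))
      - hc k A A H ∘ₗ ((δA.rTensor H) ∘ₗ ((TensorProduct.comm k H A).toLinearMap ∘ₗ ψ)))))
        + map (map j j) i ∘ₗ ((δH.rTensor A) ∘ₗ ψ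
      + hc k H A H ∘ₗ ((ψ.rTensor H) ∘ₗ δH)
      - hc k H A H ∘ₗ ((φ.rTensor H) ∘ₗ ((TensorProduct.comm k H A).toLinearMap ∘ₗ ψ))
      - hc k H A H ∘ₗ (hc k A H H ∘ₗ ((((TensorProduct.comm k H A).toLinearMap ∘ₗ ψ).rTensor H) ∘ₗ δH))
      + hc k H A H ∘ₗ (hc k A H H ∘ₗ ((((TensorProduct.comm k H A).toLinearMap ∘ₗ φ).rTensor H) ∘ₗ ((TensorProduct.comm k H A).toLinearMap ∘ₗ ψ))))
        + map (map i j) j ∘ₗ (hc k H H A ∘ₗ ((δH.rTensor A) ∘ₗ ψ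
      + hc k H A H ∘ₗ ((ψ.rTensor H) ∘ₗ δH)
      - hc k H A H ∘ₗ ((φ.rTensor H) ∘ₗ ((TensorProduct.comm k H A).toLinearMap ∘ₗ ψ))
      - hc k H A H ∘ₗ (hc k A H H ∘ₗ ((((TensorProduct.comm k H A).toLinearMap ∘ₗ ψ).rTensor H) ∘ₗ δH))
      + hc k H A H ∘ₗ (hc k A H H ∘ₗ ((((TensorProduct.comm k H A).toLinearMap ∘ₗ φ).rTensor H) ∘ₗ ((TensorProduct.comm k H A).toLinearMap ∘ₗ ψ)))))
        + map (map j i) j ∘ₗ (hc k A H H ∘ₗ (hc k H H A ∘ₗ ((δH.rTensor A) ∘ₗ ψ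
      + hc k H A H ∘ₗ ((ψ.rTensor H) ∘ₗ δH)
      - hc k H A H ∘ₗ ((φ.rTensor H) ∘ₗ ((TensorProduct.comm k H A).toLinearMap ∘ₗ ψ))
      - hc k H A H ∘ₗ (hc k A H H ∘ₗ ((((TensorProduct.comm k H A).toLinearMap ∘ₗ ψ).rTensor H) ∘ₗ δH))
      + hc k H A H ∘ₗ (hc k A H H ∘ₗ ((((TensorProduct.comm k H A).toLinearMap ∘ₗ φ).rTensor H) ∘ₗ ((TensorProduct.comm k H A).toLinearMap ∘ₗ ψ)))))) := by
        simp only [LinearMap.comp_add, LinearMap.comp_sub, LinearMap.add_comp,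
          LinearMap.sub_comp, LinearMap.id_comp, LinearMap.comp_assoc, rT_mapD]
        rw [hi, hj]
        simp only [map_add_left, map_sub_left, map_comp_rT, LinearMap.comp_add,
          LinearMap.comp_sub, LinearMap.add_comp, LinearMap.sub_comp,
          LinearMap.comp_assoc, cyc_eq_hc, hc_mapD, hc3_comp]
        abel
      rw [expand, hJH, hS1p, hS2p]
      simp only [LinearMap.comp_zero, LinearMap.zero_comp, add_zero, zero_add]

end
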